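/- For all integers n ≥ k ≥ 2 there exists a k-dicritical digraph with exactly n vertices. -/

import Mathlib

/-- A (simple) digraph: a finite vertex set (of naturals) together with a finite
set of arcs between distinct vertices. -/
structure FDigraph where
  verts : Finset ℕ
  arcs : Finset (ℕ × ℕ)
  wf : ∀ a ∈ arcs, a.1 ∈ verts ∧ a.2 ∈ verts ∧ a.1 ≠ a.2

namespace FDigraph

/-- Smart constructor: keeps only the legal arcs. -/
def mk' (V : Finset ℕ) (A : Finset (ℕ × ℕ)) : FDigraph where
  verts := V
  arcs := A.filter fun a => a.1 ∈ V ∧ a.2 ∈ V ∧ a.1 ≠ a.2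
  wf := by
    intro a ha
    simp only [Finset.mem_filter] at ha
    exact ha.2

/-- A directed cycle, given as its (nonempty, duplicate-free) list of vertices:
every cyclically consecutive pair is an arc. -/
def IsDicycle (G : FDigraph) (l : List ℕ) : Prop :=
  l ≠ [] ∧ l.Nodup ∧ ∀ p ∈ l.zip (l.rotate 1), p ∈ G.arcs

/-- A set of vertices is acyclic if it contains no directed cycle. -/
def AcyclicOn (G : FDigraph) (S : Set ℕ) : Prop :=
  ¬ ∃ l, G.IsDicycle l ∧ ∀ v ∈ l, v ∈ S

/-- A `k`-dicolouring: colours `0, …, k-1`, every colour class acyclic. -/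
def IsDicolouring (G : FDigraph) (k : ℕ) (φ : ℕ → ℕ) : Prop :=
  (∀ v ∈ G.verts, φ v < k) ∧ ∀ c, G.AcyclicOn {v | φ v = c}

/-- The dichromatic number. -/
noncomputable def dichi (G : FDigraph) : ℕ := sInf {k | ∃ φ, G.IsDicolouring k φ}

/-- Subdigraph relation. -/
def Subdigraph (H G : FDigraph) : Prop := H.verts ⊆ G.verts ∧ H.arcs ⊆ G.arcs

/-- `G` is `k`-dicritical. -/
def Dicritical (G : FDigraph) (k : ℕ) : Prop :=
  G.dichi = k ∧ ∀ H, Subdigraph H G → H ≠ G → H.dichi ≤ k - 1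

/-- Induced subdigraph on a finite set of vertices. -/
def induce (G : FDigraph) (S : Finset ℕ) : FDigraph := mk' (G.verts ∩ S) G.arcs

def outDeg (G : FDigraph) (v : ℕ) : ℕ := (G.arcs.filter fun a => a.1 = v).card
def inDeg (G : FDigraph) (v : ℕ) : ℕ := (G.arcs.filter fun a => a.2 = v).card
def deg (G : FDigraph) (v : ℕ) : ℕ := G.outDeg v + G.inDeg v

/-- Weak adjacency: an arc in either direction. -/
def wadj (G : FDigraph) (u v : ℕ) : Prop := (u, v) ∈ G.arcs ∨ (v, u) ∈ G.arcs

/-- Weak reachability. -/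
def WReach (G : FDigraph) : ℕ → ℕ → Prop := Relation.ReflTransGen G.wadj

/-- A digraph is connected when its underlying graph is connected
(the empty digraph counts as connected). -/
def Connected (G : FDigraph) : Prop := ∀ u ∈ G.verts, ∀ v ∈ G.verts, G.WReach u v

/-- The set of connected components. -/
def components (G : FDigraph) : Set (Set ℕ) :=
  {C | ∃ v ∈ G.verts, C = {u | u ∈ G.verts ∧ G.WReach v u}}

/-- The number of connected components. -/
noncomputable def numComponents (G : FDigraph) : ℕ := G.components.ncard

/-- Isomorphism of digraphs. -/
def Iso (G H : FDigraph) : Prop :=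
  ∃ f : ℕ → ℕ, Set.BijOn f ↑G.verts ↑H.verts ∧
    ∀ u ∈ G.verts, ∀ v ∈ G.verts, ((u, v) ∈ G.arcs ↔ (f u, f v) ∈ H.arcs)

/-- The bidirected (complete) digraph `↔K_n`. -/
def completeD (n : ℕ) : FDigraph := mk' (Finset.range n) (Finset.range n ×ˢ Finset.range n)

/-- The directed cycle `C⃗_n`. -/
def dirCycle (n : ℕ) : FDigraph :=
  mk' (Finset.range n)
    ((Finset.range n ×ˢ Finset.range n).filter fun a => a.2 = (a.1 + 1) % n)

/-- The bidirected cycle `↔C_n`. -/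
def biCycle (n : ℕ) : FDigraph :=
  mk' (Finset.range n)
    ((Finset.range n ×ˢ Finset.range n).filter fun a =>
      a.2 = (a.1 + 1) % n ∨ a.1 = (a.2 + 1) % n)

/-- The Dirac join of `↔K_{k-2}` (on `{0,…,k-3}`) and the directed triangle
`C⃗_3` (on `{k-2, k-1, k}`). -/
def diracJoinExample (k : ℕ) : FDigraph :=
  mk' (Finset.range (k + 1))
    ((Finset.range (k + 1) ×ˢ Finset.range (k + 1)).filter fun a =>
      a.1 < k - 2 ∨ a.2 < k - 2 ∨ a.2 = (if a.1 = k then k - 2 else a.1 + 1))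

end FDigraph

namespace FDigraph

/-- Extensionality for digraphs. -/
lemma ext' {G H : FDigraph} (h1 : G.verts = H.verts) (h2 : G.arcs = H.arcs) : G = H := by
  cases G; cases H; simp_all

/-- If some weight function strictly increases along every arc inside `S`,
then `S` is acyclic. -/
lemma acyclic_of_weight (G : FDigraph) (S : Set ℕ) (w : ℕ → ℕ)
    (h : ∀ u v : ℕ, (u, v) ∈ G.arcs → u ∈ S → v ∈ S → w u < w v) :
    G.AcyclicOn S := by
  rintro ⟨l, ⟨hne, _, hzip⟩, hS⟩
  have hlpos : 0 < l.length := List.length_pos_iff.mpr hne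
  obtain ⟨y, hy⟩ := List.exists_mem_of_ne_nil l hne
  obtain ⟨x, hxl, hmax⟩ := Finset.exists_max_image l.toFinset w ⟨y, List.mem_toFinset.2 hy⟩
  obtain ⟨i, hi, hxi⟩ := List.mem_iff_getElem.mp (List.mem_toFinset.1 hxl)
  have hrl : (l.rotate 1).length = l.length := List.length_rotate l 1
  have hji : (i + 1) % l.length < l.length := Nat.mod_lt _ hlpos
  have hi2 : i < (l.rotate 1).length := by omega
  have hi3 : i < (l.zip (l.rotate 1)).length := by
    rw [List.length_zip, hrl, Nat.min_self]; omega
  have hget : (l.zip (l.rotate 1))[i] = (l[i], (l.rotate 1)[i]) := List.getElem_zip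
  have hrot : (l.rotate 1)[i] = l[(i + 1) % l.length] := by
    rw [List.getElem_rotate]
  have hmem : ((l[i], l[(i + 1) % l.length]) : ℕ × ℕ) ∈ l.zip (l.rotate 1) := by
    rw [← hrot, ← hget]; exact List.getElem_mem hi3
  have harc := hzip _ hmem
  have h1 := h _ _ harc (hS _ (List.getElem_mem hi)) (hS _ (List.getElem_mem hji))
  have h2 := hmax _ (List.mem_toFinset.2 (List.getElem_mem hji))
  rw [hxi] at h1
  omega

/-- The construction: a bidirected clique on `{0,…,s-1}` joined (bidirectionally)
to a directed cycle on `{s,…,s+m-1}`. -/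
def myG (s m : ℕ) : FDigraph :=
  FDigraph.mk' (Finset.range (s + m))
    ((Finset.range (s + m) ×ˢ Finset.range (s + m)).filter fun a =>
      a.1 < s ∨ a.2 < s ∨ a.2 = a.1 + 1 ∨ (a.1 = s + m - 1 ∧ a.2 = s))

lemma mem_myG {s m u v : ℕ} :
    (u, v) ∈ (myG s m).arcs ↔
      u < s + m ∧ v < s + m ∧ u ≠ v ∧
        (u < s ∨ v < s ∨ v = u + 1 ∨ (u = s + m - 1 ∧ v = s)) := by
  simp only [myG, FDigraph.mk', Finset.mem_filter, Finset.mem_product, Finset.mem_range]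
  tauto

lemma verts_myG (s m : ℕ) : (myG s m).verts = Finset.range (s + m) := rfl

/-- The key modular-weight inequality along the cycle part. -/
lemma rot_weight {s m u v t₀ : ℕ} (ht₀ : t₀ < m)
    (hu1 : s ≤ u) (hu2 : u < s + m) (hv2 : v < s + m)
    (hdisj : v = u + 1 ∨ (u = s + m - 1 ∧ v = s))
    (h1 : v = u + 1 → u ≠ s + t₀)
    (h2 : u = s + m - 1 → v = s → t₀ ≠ m - 1) :
    (u - s + (m - 1 - t₀)) % m < (v - s + (m - 1 - t₀)) % m := by
  rcases hdisj with h | ⟨hu, hv⟩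
  · have hne := h1 h
    have hvs : v - s = (u - s) + 1 := by omega
    rw [hvs]
    rcases Nat.lt_or_ge (u - s) t₀ with hc | hc
    · rw [Nat.mod_eq_of_lt (by omega), Nat.mod_eq_of_lt (by omega)]; omega
    · have e1 : u - s + (m - 1 - t₀) = m + (u - s - t₀ - 1) := by omega
      have e2 : u - s + 1 + (m - 1 - t₀) = m + (u - s - t₀) := by omega
      rw [e1, e2, Nat.add_mod_left, Nat.add_mod_left,
        Nat.mod_eq_of_lt (by omega), Nat.mod_eq_of_lt (by omega)]
      omega
  · have ht1 : t₀ < m - 1 := by have := h2 hu hv; omega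
    have e1 : u - s + (m - 1 - t₀) = m + (m - 2 - t₀) := by omega
    have e2 : v - s + (m - 1 - t₀) = m - 1 - t₀ := by omega
    rw [e1, e2, Nat.add_mod_left, Nat.mod_eq_of_lt (by omega), Nat.mod_eq_of_lt (by omega)]
    omega

/-- The long directed cycle of `myG` is a dicycle. -/
lemma cycle_dicycle (s m : ℕ) (hm : 2 ≤ m) : (myG s m).IsDicycle (List.range' s m) := by
  refine ⟨by simp; omega, List.nodup_range' (s := s) (n := m), ?_⟩
  intro p hp
  have hlen : (List.range' s m).length = m := List.length_range' ..
  obtain ⟨i, hi, hpe⟩ := List.mem_iff_getElem.mp hp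
  have him : i < m := by
    rw [List.length_zip, List.length_rotate, hlen, Nat.min_self] at hi; omega
  have hp' : p = (s + i, s + ((i + 1) % m)) := by
    rw [← hpe, List.getElem_zip]
    have e1 : (List.range' s m)[i]'(by omega) = s + i := by
      rw [List.getElem_range']; omega
    have e2 : ((List.range' s m).rotate 1)[i]'(by rw [List.length_rotate]; omega)
        = s + ((i + 1) % m) := by
      rw [List.getElem_rotate, List.getElem_range', hlen]
      simp
    rw [e1, e2]
  rw [hp']
  rcases Nat.lt_or_ge (i + 1) m with hc | hc
  · rw [Nat.mod_eq_of_lt hc]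
    exact mem_myG.mpr ⟨by omega, by omega, by omega, by omega⟩
  · rw [show i + 1 = m by omega, Nat.mod_self]
    exact mem_myG.mpr ⟨by omega, by omega, by omega, by omega⟩

end FDigraph

namespace FDigraph

/-- No `(s+1)`-dicolouring of `myG s m` exists. -/
lemma no_small (s m : ℕ) (hm : 2 ≤ m) (φ : ℕ → ℕ)
    (hb : ∀ v ∈ (myG s m).verts, φ v < s + 1)
    (hac : ∀ c, (myG s m).AcyclicOn {v | φ v = c}) : False := by
  have hvb : ∀ v, v < s + m → φ v < s + 1 := fun v hv =>
    hb v (by rw [verts_myG]; exact Finset.mem_range.mpr hv)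
  have hdist : ∀ x y, x < s → y < s + m → x ≠ y → φ x ≠ φ y := by
    intro x y hx hy hxy heq
    apply hac (φ y)
    refine ⟨[x, y], ⟨by simp, by simp [hxy], ?_⟩, ?_⟩
    · have h1 : List.rotate [x, y] 1 = [y, x] := by
        rw [List.rotate_cons_succ, List.rotate_zero]; rfl
      rw [h1]
      intro p hp
      have hp2 : p = (x, y) ∨ p = (y, x) := by simpa using hp
      rcases hp2 with rfl | rfl
      · exact mem_myG.mpr ⟨by omega, by omega, hxy, Or.inl hx⟩
      · exact mem_myG.mpr ⟨by omega, by omega, Ne.symm hxy, Or.inr (Or.inl hx)⟩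
    · intro v hv
      have hv2 : v = x ∨ v = y := by simpa using hv
      rcases hv2 with rfl | rfl
      · exact heq
      · rfl
  have key : ∀ y, s ≤ y → y < s + m → φ y = φ s := by
    intro y h1 h2
    have hinj : Set.InjOn φ (Finset.range s) := by
      intro a ha b hb2 hab
      by_contra hne
      simp only [Finset.coe_range, Set.mem_Iio] at ha hb2
      exact hdist a b ha (by omega) hne hab
    have hAcard : ((Finset.range s).image φ).card = s := by
      rw [Finset.card_image_of_injOn hinj, Finset.card_range]
    have hAsub : (Finset.range s).image φ ⊆ Finset.range (s + 1) := by
      intro c hc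
      simp only [Finset.mem_image, Finset.mem_range] at hc
      obtain ⟨x, hx, rfl⟩ := hc
      exact Finset.mem_range.mpr (hvb x (by omega))
    have hmemB : ∀ z, s ≤ z → z < s + m →
        φ z ∈ Finset.range (s + 1) \ (Finset.range s).image φ := by
      intro z hz1 hz2
      rw [Finset.mem_sdiff]
      refine ⟨Finset.mem_range.mpr (hvb z hz2), ?_⟩
      simp only [Finset.mem_image, Finset.mem_range, not_exists]
      rintro x ⟨hx, heq⟩
      exact hdist x z hx hz2 (by omega) heq
    have hBcard : (Finset.range (s + 1) \ (Finset.range s).image φ).card = 1 := by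
      rw [Finset.card_sdiff_of_subset hAsub, hAcard, Finset.card_range]; omega
    obtain ⟨b, hb1⟩ := Finset.card_eq_one.mp hBcard
    have e1 := hmemB y h1 h2
    have e2 := hmemB s le_rfl (by omega)
    rw [hb1, Finset.mem_singleton] at e1 e2
    rw [e1, e2]
  apply hac (φ s)
  refine ⟨List.range' s m, cycle_dicycle s m hm, ?_⟩
  intro v hv
  rw [List.mem_range'_1] at hv
  exact key v hv.1 hv.2

/-- The optimal `(s+2)`-dicolouring of `myG s m`. -/
lemma col_full (s m : ℕ) :
    (myG s m).IsDicolouring (s + 2)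
      (fun x => if x < s then x else if x = s then s else s + 1) := by
  constructor
  · intro v _; dsimp only; split_ifs <;> omega
  · intro c
    apply acyclic_of_weight _ _ id
    intro u v harc hu hv
    simp only [Set.mem_setOf_eq] at hu hv
    obtain ⟨hun, hvn, huv, hdisj⟩ := mem_myG.mp harc
    simp only [id_eq]
    split_ifs at hu hv <;> omega

lemma dichi_myG (s m : ℕ) (hm : 2 ≤ m) : (myG s m).dichi = s + 2 := by
  have hmem : (s + 2) ∈ {k | ∃ φ, (myG s m).IsDicolouring k φ} := ⟨_, col_full s m⟩
  apply le_antisymm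
  · exact Nat.sInf_le hmem
  · apply le_csInf ⟨_, hmem⟩
    intro j hj
    by_contra hlt
    push_neg at hlt
    obtain ⟨φ, h1, h2⟩ := hj
    exact no_small s m hm φ (fun v hv => lt_of_lt_of_le (h1 v hv) (by omega)) h2

end FDigraph

namespace FDigraph

/-- Colouring for a subdigraph missing a clique vertex `v₀ < s`. -/
lemma col_vertex_lt (s m v₀ : ℕ) (H : FDigraph)
    (hA : H.arcs ⊆ (myG s m).arcs) (hv : v₀ ∉ H.verts) (hvs : v₀ < s) :
    H.IsDicolouring (s + 1) (fun x => if x < s then x else if x = s then v₀ else s) := by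
  constructor
  · intro x _; dsimp only; split_ifs <;> omega
  · intro c
    apply acyclic_of_weight _ _ id
    intro u v harc hu hv'
    simp only [Set.mem_setOf_eq] at hu hv'
    obtain ⟨hun, hvn, huv, hdisj⟩ := mem_myG.mp (hA harc)
    have hw := H.wf _ harc
    have hu0 : u ≠ v₀ := fun h => hv (h ▸ hw.1)
    have hv0 : v ≠ v₀ := fun h => hv (h ▸ hw.2.1)
    simp only [id_eq]
    split_ifs at hu hv' <;> omega

/-- Colouring for a subdigraph missing a cycle vertex `v₀ ≥ s`. -/
lemma col_vertex_ge (s m v₀ : ℕ) (H : FDigraph)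
    (hA : H.arcs ⊆ (myG s m).arcs) (hv : v₀ ∉ H.verts) (hv1 : s ≤ v₀) (hv2 : v₀ < s + m) :
    H.IsDicolouring (s + 1) (fun x => if x < s then x else s) := by
  constructor
  · intro x _; dsimp only; split_ifs <;> omega
  · intro c
    apply acyclic_of_weight _ _ (fun x => (x - s + (m - 1 - (v₀ - s))) % m)
    intro u v harc hu hv'
    simp only [Set.mem_setOf_eq] at hu hv'
    obtain ⟨hun, hvn, huv, hdisj⟩ := mem_myG.mp (hA harc)
    have hw := H.wf _ harc
    have hu0 : u ≠ v₀ := fun h => hv (h ▸ hw.1)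
    have hv0 : v ≠ v₀ := fun h => hv (h ▸ hw.2.1)
    split_ifs at hu hv' with h1 h2
    · exfalso; omega
    · exfalso; omega
    · exfalso; omega
    · exact rot_weight (by omega) (by omega) hun hvn (by omega) (by omega) (by omega)

/-- Colouring for a subdigraph missing a cycle-successor arc. -/
lemma col_succ_del (s m u₀ : ℕ) (H : FDigraph)
    (hA : H.arcs ⊆ (myG s m).arcs) (hnotin : (u₀, u₀ + 1) ∉ H.arcs)
    (h1 : s ≤ u₀) (h2 : u₀ + 1 < s + m) :
    H.IsDicolouring (s + 1) (fun x => if x < s then x else s) := by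
  constructor
  · intro x _; dsimp only; split_ifs <;> omega
  · intro c
    apply acyclic_of_weight _ _ (fun x => (x - s + (m - 1 - (u₀ - s))) % m)
    intro u v harc hu hv'
    simp only [Set.mem_setOf_eq] at hu hv'
    obtain ⟨hun, hvn, huv, hdisj⟩ := mem_myG.mp (hA harc)
    split_ifs at hu hv' with ha hb
    · exfalso; omega
    · exfalso; omega
    · exfalso; omega
    · refine rot_weight (by omega) (by omega) hun hvn (by omega) ?_ (by omega)
      intro hsucc hequ
      apply hnotin
      have e : (u, v) = (u₀, u₀ + 1) := by rw [Prod.mk.injEq]; omega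
      rw [← e]; exact harc

/-- Colouring for a subdigraph missing the wrap-around cycle arc. -/
lemma col_wrap_del (s m : ℕ) (H : FDigraph)
    (hA : H.arcs ⊆ (myG s m).arcs) (hnotin : (s + m - 1, s) ∉ H.arcs) (hm : 2 ≤ m) :
    H.IsDicolouring (s + 1) (fun x => if x < s then x else s) := by
  constructor
  · intro x _; dsimp only; split_ifs <;> omega
  · intro c
    apply acyclic_of_weight _ _ id
    intro u v harc hu hv'
    simp only [Set.mem_setOf_eq] at hu hv'
    obtain ⟨hun, hvn, huv, hdisj⟩ := mem_myG.mp (hA harc)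
    simp only [id_eq]
    split_ifs at hu hv'
    · omega
    · omega
    · omega
    · rcases hdisj with h | h | h | h
      · omega
      · omega
      · omega
      · exfalso
        apply hnotin
        have e : (u, v) = (s + m - 1, s) := by rw [Prod.mk.injEq]; omega
        rw [← e]; exact harc

/-- Colouring for a subdigraph missing a clique arc (both ends `< s`). -/
lemma col_both_lt (s m u₀ v₀ : ℕ) (H : FDigraph)
    (hA : H.arcs ⊆ (myG s m).arcs) (hnotin : (u₀, v₀) ∉ H.arcs)
    (h1 : u₀ < s) (h2 : v₀ < s) (hne0 : u₀ ≠ v₀) :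
    H.IsDicolouring (s + 1)
      (fun x => if x = u₀ then v₀ else if x < s then x else if x = s then u₀ else s) := by
  constructor
  · intro x _; dsimp only; split_ifs <;> omega
  · intro c
    by_cases hc : c = v₀
    · apply acyclic_of_weight _ _ (fun x => if x = u₀ then 1 else 0)
      intro u v harc hu hv'
      simp only [Set.mem_setOf_eq] at hu hv'
      obtain ⟨hun, hvn, huv, hdisj⟩ := mem_myG.mp (hA harc)
      have hP : ¬(u = u₀ ∧ v = v₀) := by
        rintro ⟨e1, e2⟩; exact hnotin (by rw [← e1, ← e2]; exact harc)
      have hu' : u = u₀ ∨ u = v₀ := by split_ifs at hu <;> omega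
      have hv'' : v = u₀ ∨ v = v₀ := by split_ifs at hv' <;> omega
      have h5 : u = v₀ ∧ v = u₀ := by omega
      rw [h5.1, h5.2]
      rw [if_neg (by omega), if_pos rfl]
      omega
    · apply acyclic_of_weight _ _ id
      intro u v harc hu hv'
      simp only [Set.mem_setOf_eq] at hu hv'
      obtain ⟨hun, hvn, huv, hdisj⟩ := mem_myG.mp (hA harc)
      simp only [id_eq]
      split_ifs at hu hv' <;> omega

/-- Colouring for a subdigraph missing a join arc `u₀ < s ≤ v₀`. -/
lemma col_mixed_lo (s m u₀ v₀ : ℕ) (H : FDigraph)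
    (hA : H.arcs ⊆ (myG s m).arcs) (hnotin : (u₀, v₀) ∉ H.arcs)
    (h1 : u₀ < s) (h2 : s ≤ v₀) (h3 : v₀ < s + m) :
    H.IsDicolouring (s + 1)
      (fun x => if x = u₀ ∨ x = v₀ then u₀ else if x < s then x else s) := by
  constructor
  · intro x _; dsimp only; split_ifs <;> omega
  · intro c
    by_cases hc : c = u₀
    · apply acyclic_of_weight _ _ (fun x => if x = u₀ then 1 else 0)
      intro u v harc hu hv'
      simp only [Set.mem_setOf_eq] at hu hv'
      obtain ⟨hun, hvn, huv, hdisj⟩ := mem_myG.mp (hA harc)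
      have hP : ¬(u = u₀ ∧ v = v₀) := by
        rintro ⟨e1, e2⟩; exact hnotin (by rw [← e1, ← e2]; exact harc)
      have hu' : u = u₀ ∨ u = v₀ := by split_ifs at hu <;> omega
      have hv'' : v = u₀ ∨ v = v₀ := by split_ifs at hv' <;> omega
      have h5 : u = v₀ ∧ v = u₀ := by omega
      rw [h5.1, h5.2]
      rw [if_neg (by omega), if_pos rfl]
      omega
    · apply acyclic_of_weight _ _ (fun x => (x - s + (m - 1 - (v₀ - s))) % m)
      intro u v harc hu hv'
      simp only [Set.mem_setOf_eq] at hu hv'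
      obtain ⟨hun, hvn, huv, hdisj⟩ := mem_myG.mp (hA harc)
      have hgu : ¬(u = u₀ ∨ u = v₀) := by
        intro hg; rw [if_pos hg] at hu; exact hc hu.symm
      have hgv : ¬(v = u₀ ∨ v = v₀) := by
        intro hg; rw [if_pos hg] at hv'; exact hc hv'.symm
      rw [if_neg hgu] at hu
      rw [if_neg hgv] at hv'
      split_ifs at hu hv' with ha hb
      · exfalso; omega
      · exfalso; omega
      · exfalso; omega
      · exact rot_weight (by omega) (by omega) hun hvn (by omega) (by omega) (by omega)

/-- Colouring for a subdigraph missing a join arc `v₀ < s ≤ u₀`. -/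
lemma col_mixed_hi (s m u₀ v₀ : ℕ) (H : FDigraph)
    (hA : H.arcs ⊆ (myG s m).arcs) (hnotin : (u₀, v₀) ∉ H.arcs)
    (h1 : v₀ < s) (h2 : s ≤ u₀) (h3 : u₀ < s + m) :
    H.IsDicolouring (s + 1)
      (fun x => if x = u₀ ∨ x = v₀ then v₀ else if x < s then x else s) := by
  constructor
  · intro x _; dsimp only; split_ifs <;> omega
  · intro c
    by_cases hc : c = v₀
    · apply acyclic_of_weight _ _ (fun x => if x = u₀ then 1 else 0)
      intro u v harc hu hv'
      simp only [Set.mem_setOf_eq] at hu hv'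
      obtain ⟨hun, hvn, huv, hdisj⟩ := mem_myG.mp (hA harc)
      have hP : ¬(u = u₀ ∧ v = v₀) := by
        rintro ⟨e1, e2⟩; exact hnotin (by rw [← e1, ← e2]; exact harc)
      have hu' : u = u₀ ∨ u = v₀ := by split_ifs at hu <;> omega
      have hv'' : v = u₀ ∨ v = v₀ := by split_ifs at hv' <;> omega
      have h5 : u = v₀ ∧ v = u₀ := by omega
      rw [h5.1, h5.2]
      rw [if_neg (by omega), if_pos rfl]
      omega
    · apply acyclic_of_weight _ _ (fun x => (x - s + (m - 1 - (u₀ - s))) % m)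
      intro u v harc hu hv'
      simp only [Set.mem_setOf_eq] at hu hv'
      obtain ⟨hun, hvn, huv, hdisj⟩ := mem_myG.mp (hA harc)
      have hgu : ¬(u = u₀ ∨ u = v₀) := by
        intro hg; rw [if_pos hg] at hu; exact hc hu.symm
      have hgv : ¬(v = u₀ ∨ v = v₀) := by
        intro hg; rw [if_pos hg] at hv'; exact hc hv'.symm
      rw [if_neg hgu] at hu
      rw [if_neg hgv] at hv'
      split_ifs at hu hv' with ha hb
      · exfalso; omega
      · exfalso; omega
      · exfalso; omega
      · exact rot_weight (by omega) (by omega) hun hvn (by omega) (by omega) (by omega)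

end FDigraph

/-- for all `n ≥ k ≥ 2` there is a `k`-dicritical digraph on `n`
vertices. -/
theorem exists_dicritical (k n : ℕ) (hk : 2 ≤ k) (hn : k ≤ n) :
    ∃ G : FDigraph, G.Dicritical k ∧ G.verts.card = n := by
  obtain ⟨s, rfl⟩ : ∃ s, k = s + 2 := ⟨k - 2, by omega⟩
  obtain ⟨m, hm2, rfl⟩ : ∃ m, 2 ≤ m ∧ n = s + m := ⟨n - (s + 2) + 2, by omega, by omega⟩
  refine ⟨FDigraph.myG s m, ⟨FDigraph.dichi_myG s m hm2, ?_⟩, by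
    rw [FDigraph.verts_myG, Finset.card_range]⟩
  intro H hsub hne
  have hred : s + 2 - 1 = s + 1 := by omega
  rw [hred]
  have key : ∃ φ, H.IsDicolouring (s + 1) φ := by
    by_cases hV : H.verts = (FDigraph.myG s m).verts
    · have hAne : H.arcs ≠ (FDigraph.myG s m).arcs := fun h => hne (FDigraph.ext' hV h)
      have hex : ∃ a ∈ (FDigraph.myG s m).arcs, a ∉ H.arcs := by
        by_contra hcon
        push_neg at hcon
        exact hAne (Finset.Subset.antisymm hsub.2 hcon)
      obtain ⟨⟨u₀, v₀⟩, haG, haH⟩ := hex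
      obtain ⟨hu₀, hv₀, hne0, hdisj0⟩ := FDigraph.mem_myG.mp haG
      rcases Nat.lt_or_ge u₀ s with h1 | h1
      · rcases Nat.lt_or_ge v₀ s with h2 | h2
        · exact ⟨_, FDigraph.col_both_lt s m u₀ v₀ H hsub.2 haH h1 h2 hne0⟩
        · exact ⟨_, FDigraph.col_mixed_lo s m u₀ v₀ H hsub.2 haH h1 h2 hv₀⟩
      · rcases Nat.lt_or_ge v₀ s with h2 | h2
        · exact ⟨_, FDigraph.col_mixed_hi s m u₀ v₀ H hsub.2 haH h2 h1 hu₀⟩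
        · have hcyc : v₀ = u₀ + 1 ∨ (u₀ = s + m - 1 ∧ v₀ = s) := by omega
          rcases hcyc with h3 | h3
          · exact ⟨_, FDigraph.col_succ_del s m u₀ H hsub.2
              (by rw [← h3]; exact haH) h1 (by omega)⟩
          · exact ⟨_, FDigraph.col_wrap_del s m H hsub.2
              (by rw [← h3.1, ← h3.2]; exact haH) hm2⟩
    · have hex : ∃ v ∈ (FDigraph.myG s m).verts, v ∉ H.verts := by
        by_contra hcon
        push_neg at hcon
        exact hV (Finset.Subset.antisymm hsub.1 hcon)
      obtain ⟨v₀, hv₀G, hv₀H⟩ := hex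
      have hv₀n : v₀ < s + m := by
        rw [FDigraph.verts_myG] at hv₀G; exact Finset.mem_range.mp hv₀G
      rcases Nat.lt_or_ge v₀ s with h1 | h1
      · exact ⟨_, FDigraph.col_vertex_lt s m v₀ H hsub.2 hv₀H h1⟩
      · exact ⟨_, FDigraph.col_vertex_ge s m v₀ H hsub.2 hv₀H h1 hv₀n⟩
  exact Nat.sInf_le key
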